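/- Let Γ be an infinite group with trivial center, H a nontrivial abelian group, and 𝓖 = H^(Γ) ⋊ (Γ × Γ) the left–right wreath product. Then 𝓖 is an icc group: every nontrivial conjugacy class of 𝓖 is infinite. -/

import Mathlib

noncomputable section

/-- The left-right translation bijection `k ↦ g k h⁻¹` of `Γ` associated to `(g,h) ∈ Γ × Γ`. -/
def lrEquiv {Γ : Type*} [Group Γ] (p : Γ × Γ) : Γ ≃ Γ :=
  (Equiv.mulRight p.2⁻¹).trans (Equiv.mulLeft p.1)

/-- The left-right action of `Γ × Γ` on the base `H^(Γ)` of the wreath product,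
`((g,h)·x)_k = x_{g⁻¹ k h}`. -/
def lrAddAut (Γ H : Type*) [Group Γ] [AddCommGroup H] : (Γ × Γ) →* Multiplicative (AddAut (Γ →₀ H)) where
  toFun p := Multiplicative.ofAdd (Finsupp.domCongr (lrEquiv p) : (Γ →₀ H) ≃+ (Γ →₀ H))
  map_one' := by
    show Multiplicative.ofAdd _ = Multiplicative.ofAdd (0 : AddAut (Γ →₀ H))
    refine congrArg Multiplicative.ofAdd ?_
    ext x k
    show x ((lrEquiv 1).symm k) = x k
    congr 1
    simp [lrEquiv]
    rfl
  map_mul' p q := by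
    show Multiplicative.ofAdd _ = Multiplicative.ofAdd (_ + _ : AddAut (Γ →₀ H))
    refine congrArg Multiplicative.ofAdd ?_
    ext x k
    show x ((lrEquiv (p * q)).symm k) = x ((lrEquiv q).symm ((lrEquiv p).symm k))
    congr 1
    simp only [lrEquiv, Prod.fst_mul, Prod.snd_mul, Equiv.symm_trans_apply,
      Equiv.mulLeft_symm, Equiv.mulRight_symm, Equiv.coe_mulLeft, Equiv.coe_mulRight, inv_inv]
    group

/-- The same action, as an action on the multiplicative version of `H^(Γ)`. -/
def lrMulAut (Γ H : Type*) [Group Γ] [AddCommGroup H] :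
    (Γ × Γ) →* MulAut (Multiplicative (Γ →₀ H)) where
  toFun p := AddEquiv.toMultiplicative (Multiplicative.toAdd (lrAddAut Γ H p))
  map_one' := by
    have h : lrAddAut Γ H 1 = 1 := map_one _
    ext x : 1
    show AddEquiv.toMultiplicative (Multiplicative.toAdd (lrAddAut Γ H 1)) x = x
    rw [h]
    rfl
  map_mul' p q := by
    have h : lrAddAut Γ H (p * q) = lrAddAut Γ H p * lrAddAut Γ H q := map_mul _ _ _
    ext x : 1
    show AddEquiv.toMultiplicative (Multiplicative.toAdd (lrAddAut Γ H (p * q))) x =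
      (AddEquiv.toMultiplicative (Multiplicative.toAdd (lrAddAut Γ H p)) *
        AddEquiv.toMultiplicative (Multiplicative.toAdd (lrAddAut Γ H q))) x
    rw [h]
    rfl

/-- The left-right wreath product `H^(Γ) ⋊ (Γ × Γ)`. -/
abbrev LRWreath (Γ H : Type*) [Group Γ] [AddCommGroup H] :=
  SemidirectProduct (Multiplicative (Γ →₀ H)) (Γ × Γ) (lrMulAut Γ H)

/-- The homomorphism `p : H^(Γ) → H` summing all coordinates. -/
def coordSum (Γ H : Type*) [Group Γ] [AddCommGroup H] : (Γ →₀ H) →+ H :=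
  Finsupp.liftAddHom fun _ : Γ => AddMonoidHom.id H

end


section Aux

lemma aux_image_infinite_of_finite_fibers {α β : Type*} {S : Set α} (hS : S.Infinite)
    (f : α → β) (hf : ∀ a ∈ S, {a' ∈ S | f a' = f a}.Finite) : (f '' S).Infinite := by
  intro hfin
  apply hS
  have hsub : S ⊆ ⋃ b ∈ f '' S, {a' ∈ S | f a' = b} := by
    intro a ha
    exact Set.mem_biUnion (Set.mem_image_of_mem f ha) ⟨ha, rfl⟩
  refine Set.Finite.subset (hfin.biUnion ?_) hsub
  rintro b ⟨a, ha, rfl⟩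
  exact hf a ha

variable {Γ H : Type*} [Group Γ] [AddCommGroup H]

lemma aux_lrEquiv_apply (p : Γ × Γ) (k : Γ) : lrEquiv p k = p.1 * (k * p.2⁻¹) := rfl

lemma aux_lrAct (p : Γ × Γ) (v : Γ →₀ H) :
    (lrMulAut Γ H p) (Multiplicative.ofAdd v)
      = Multiplicative.ofAdd (Finsupp.equivMapDomain (lrEquiv p) v) := rfl

lemma aux_conj_left (b x : LRWreath Γ H) :
    (b * x * b⁻¹).left = b.left * (lrMulAut Γ H b.right) x.left *
      (lrMulAut Γ H (b.right * x.right * b.right⁻¹)) b.left⁻¹ := by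
  simp [mul_assoc, map_mul]

lemma aux_conj_right (b x : LRWreath Γ H) :
    (b * x * b⁻¹).right = b.right * x.right * b.right⁻¹ := by simp

/-- the fixed-point-free set of `lrEquiv p` is infinite when `p ≠ 1`. -/
lemma aux_T_infinite [Infinite Γ] (hZ : Subgroup.center Γ = ⊥) (p : Γ × Γ) (hp : p ≠ 1) :
    {k : Γ | lrEquiv p k ≠ k}.Infinite := by
  obtain ⟨g, h⟩ := p
  have hmem : ∀ k : Γ, lrEquiv (g, h) k = k ↔ g * k = k * h := by
    intro k
    rw [aux_lrEquiv_apply]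
    constructor
    · intro e
      have : g * (k * h⁻¹) * h = k * h := by rw [e]
      simpa [mul_assoc] using this
    · intro e
      have : g * (k * h⁻¹) = k * h * h⁻¹ := by rw [← e]; group
      simpa [mul_assoc] using this
  by_contra hT
  rw [Set.not_infinite] at hT
  by_cases hg : g = 1
  · -- then h ≠ 1 and there are no fixed points at all
    subst hg
    have hh : h ≠ 1 := by
      intro hh; exact hp (by rw [hh]; rfl)
    have : (Set.univ : Set Γ) ⊆ {k : Γ | lrEquiv ((1 : Γ), h) k ≠ k} := by
      intro k _
      show lrEquiv ((1 : Γ), h) k ≠ k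
      intro e
      have e' := (hmem k).1 e
      have : k * (1 : Γ) = k * h := by simpa using e'
      exact hh (mul_left_cancel this).symm
    exact Set.infinite_univ (Set.Finite.subset hT this)
  · -- the complement (fixed set) is infinite; translate it into the moved set
    have hFinf : ({k : Γ | lrEquiv (g, h) k ≠ k})ᶜ.Infinite := hT.infinite_compl
    have hFmem : ∀ k : Γ, k ∈ ({k : Γ | lrEquiv (g, h) k ≠ k})ᶜ ↔ g * k = k * h := by
      intro k
      simp only [Set.mem_compl_iff, Set.mem_setOf_eq, not_not]
      exact hmem k
    obtain ⟨k₀, hk₀⟩ := hFinf.nonempty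
    have hk₀' : g * k₀ = k₀ * h := (hFmem k₀).1 hk₀
    -- g is not central
    have hgc : ∃ u : Γ, ¬ (u * g = g * u) := by
      by_contra hc
      push_neg at hc
      have : g ∈ Subgroup.center Γ := Subgroup.mem_center_iff.2 hc
      rw [hZ] at this
      exact hg this
    obtain ⟨u, hu⟩ := hgc
    -- the injection k ↦ k * k₀⁻¹ * u * k₀ maps the fixed set into the moved set
    have hinj : Set.InjOn (fun k : Γ => k * k₀⁻¹ * u * k₀)
        ({k : Γ | lrEquiv (g, h) k ≠ k})ᶜ := by
      intro a _ b _ e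
      simpa using e
    have hmaps : ∀ k ∈ ({k : Γ | lrEquiv (g, h) k ≠ k})ᶜ,
        (k * k₀⁻¹ * u * k₀) ∈ {k : Γ | lrEquiv (g, h) k ≠ k} := by
      intro k hk
      have hk' : g * k = k * h := (hFmem k).1 hk
      show lrEquiv (g, h) (k * k₀⁻¹ * u * k₀) ≠ (k * k₀⁻¹ * u * k₀)
      intro e
      have e2 : g * (k * k₀⁻¹ * u * k₀) = (k * k₀⁻¹ * u * k₀) * h := (hmem _).1 e
      apply hu
      have hh : h = k₀⁻¹ * (g * k₀) := by rw [hk₀']; group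
      have h1 : (g * k) * (k₀⁻¹ * (u * k₀)) = k * (k₀⁻¹ * (u * (k₀ * h))) := by
        simpa [mul_assoc] using e2
      rw [hk', hh] at h1
      simp only [mul_assoc, inv_mul_cancel_left, mul_inv_cancel_left] at h1
      have h2 := mul_left_cancel (mul_left_cancel h1)
      have h3 : g * u * k₀ = u * g * k₀ := by simpa [mul_assoc] using h2
      exact (mul_right_cancel h3).symm
    have himg : ((fun k : Γ => k * k₀⁻¹ * u * k₀) '' ({k : Γ | lrEquiv (g, h) k ≠ k})ᶜ).Infinite :=
      hFinf.image hinj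
    exact himg (hT.subset (by rintro _ ⟨k, hk, rfl⟩; exact hmaps k hk))

end Aux

/-- if `Γ` is an infinite group with trivial center and `H` a nontrivial
abelian group, then the left-right wreath product `𝓖 = H^(Γ) ⋊ (Γ × Γ)` is icc:
every nontrivial conjugacy class is infinite. -/
theorem stmt_2 {Γ H : Type*} [Group Γ] [Infinite Γ] [AddCommGroup H] [Nontrivial H]
    (hZ : Subgroup.center Γ = ⊥)
    (x : LRWreath Γ H) (hx : x ≠ 1) :
    {y : LRWreath Γ H | IsConj x y}.Infinite := by
  classical
  by_cases hp : x.right = 1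
  · -- the base part of `x` is nontrivial; conjugate by left translations
    have ha : Multiplicative.toAdd x.left ≠ 0 := by
      intro h0
      apply hx
      refine SemidirectProduct.ext ?_ hp
      show x.left = 1
      have : x.left = Multiplicative.ofAdd 0 := by
        rw [← h0]; simp
      simpa using this
    set v : Γ →₀ H := Multiplicative.toAdd x.left with hv
    obtain ⟨s, hs⟩ : ∃ s, s ∈ v.support := (Finsupp.support_nonempty_iff.2 ha).exists_mem
    let c : Γ → LRWreath Γ H := fun g => ⟨1, (g, 1)⟩
    let f : Γ → LRWreath Γ H := fun g => c g * x * (c g)⁻¹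
    have hfl : ∀ g : Γ,
        (f g).left = Multiplicative.ofAdd (Finsupp.equivMapDomain (lrEquiv (g, 1)) v) := by
      intro g
      show (c g * x * (c g)⁻¹).left = _
      rw [aux_conj_left]
      have h1 : (c g).left = 1 := rfl
      have h2 : (c g).right = (g, 1) := rfl
      rw [h1, h2, hp]
      simp only [mul_one, one_mul, inv_one, map_one]
      have : x.left = Multiplicative.ofAdd v := by simp [hv]
      rw [this, aux_lrAct]
    have hfib : ∀ g₁ ∈ (Set.univ : Set Γ), {g₂ ∈ (Set.univ : Set Γ) | f g₂ = f g₁}.Finite := by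
      intro g₁ _
      have hsub : {g₂ ∈ (Set.univ : Set Γ) | f g₂ = f g₁}
          ⊆ (fun w => g₁ * (s * 1⁻¹) * w⁻¹) '' ↑v.support := by
        rintro g₂ ⟨-, he⟩
        have hel : (f g₂).left = (f g₁).left := by rw [he]
        rw [hfl, hfl] at hel
        have hev : Finsupp.equivMapDomain (lrEquiv (g₂, 1)) v
            = Finsupp.equivMapDomain (lrEquiv (g₁, 1)) v := by
          simpa using hel
        have hval := DFunLike.congr_fun hev (lrEquiv (g₁, 1) s)
        rw [Finsupp.equivMapDomain_apply, Finsupp.equivMapDomain_apply,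
          Equiv.symm_apply_apply] at hval
        set w := (lrEquiv (g₂, 1)).symm (lrEquiv (g₁, 1) s) with hw
        have hwmem : w ∈ v.support := by
          rw [Finsupp.mem_support_iff, hval]
          exact Finsupp.mem_support_iff.1 hs
        refine ⟨w, hwmem, ?_⟩
        have : lrEquiv (g₂, 1) w = lrEquiv (g₁, 1) s := by
          rw [hw, Equiv.apply_symm_apply]
        rw [aux_lrEquiv_apply, aux_lrEquiv_apply] at this
        -- g₂ * (w * 1⁻¹) = g₁ * (s * 1⁻¹)
        have : g₂ * (w * 1⁻¹) * w⁻¹ = g₁ * (s * 1⁻¹) * w⁻¹ := by rw [this]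
        simpa [mul_assoc] using this.symm
      exact Set.Finite.subset (Set.Finite.image _ v.support.finite_toSet) hsub
    have himg := aux_image_infinite_of_finite_fibers Set.infinite_univ f hfib
    refine himg.mono ?_
    rintro y ⟨g, -, rfl⟩
    exact isConj_iff.2 ⟨c g, rfl⟩
  · -- the `Γ × Γ` part of `x` is nontrivial; conjugate by base elements
    obtain ⟨t, ht⟩ := exists_ne (0 : H)
    have hT := aux_T_infinite hZ x.right hp
    set v : Γ →₀ H := Multiplicative.toAdd x.left with hv
    set σ : Γ ≃ Γ := lrEquiv x.right with hσ
    let c : Γ → LRWreath Γ H := fun k => ⟨Multiplicative.ofAdd (Finsupp.single k t), 1⟩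
    let f : Γ → LRWreath Γ H := fun k => c k * x * (c k)⁻¹
    have hfl : ∀ k : Γ, Multiplicative.toAdd (f k).left
        = Finsupp.single k t + v - Finsupp.single (σ k) t := by
      intro k
      show Multiplicative.toAdd (c k * x * (c k)⁻¹).left = _
      rw [aux_conj_left]
      have h1 : (c k).left = Multiplicative.ofAdd (Finsupp.single k t) := rfl
      have h2 : (c k).right = 1 := rfl
      rw [h1, h2]
      simp only [map_one, MulAut.one_apply, one_mul, mul_one]
      rw [map_inv, aux_lrAct, Finsupp.equivMapDomain_single]
      rw [show x.left = Multiplicative.ofAdd v by simp [hv]]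
      simp [sub_eq_add_neg, ← hσ]
    have hfib : ∀ k ∈ {k : Γ | σ k ≠ k}, {k' ∈ {k : Γ | σ k ≠ k} | f k' = f k}.Finite := by
      intro k hk
      have hsub : {k' ∈ {k : Γ | σ k ≠ k} | f k' = f k} ⊆ {k, σ k} := by
        rintro k' ⟨hk', he⟩
        have hel := congrArg (fun z => Multiplicative.toAdd (SemidirectProduct.left z)) he
        change Multiplicative.toAdd (f k').left = Multiplicative.toAdd (f k).left at hel
        rw [hfl, hfl] at hel
        have e2 : Finsupp.single k' t - Finsupp.single (σ k') t
            = Finsupp.single k t - Finsupp.single (σ k) t := by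
          calc Finsupp.single k' t - Finsupp.single (σ k') t
              = (Finsupp.single k' t + v - Finsupp.single (σ k') t) - v := by abel
            _ = (Finsupp.single k t + v - Finsupp.single (σ k) t) - v := by rw [hel]
            _ = Finsupp.single k t - Finsupp.single (σ k) t := by abel
        have hval := DFunLike.congr_fun e2 k'
        rw [Finsupp.sub_apply, Finsupp.sub_apply] at hval
        simp only [Finsupp.single_apply] at hval
        simp only [Set.mem_insert_iff, Set.mem_singleton_iff]
        by_contra hne
        push_neg at hne
        obtain ⟨hne1, hne2⟩ := hne
        rw [if_pos trivial, if_neg (by exact fun e => hk' e), if_neg (fun e => hne1 e.symm),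
          if_neg (fun e => hne2 e.symm)] at hval
        simp at hval
        exact ht hval
      exact Set.Finite.subset ((Set.finite_singleton _).insert _) hsub
    have himg := aux_image_infinite_of_finite_fibers hT f hfib
    refine himg.mono ?_
    rintro y ⟨k, -, rfl⟩
    exact isConj_iff.2 ⟨c k, rfl⟩
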